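/- Let V(x,y) = a(x)b(y) where a ∈ C¹(ℝ) is bounded with a(x) > 0 for all x ∈ ℝ, and b ∈ C²(ℝ) is 1-periodic with b ≤ 0 and max b = 0. Fix ε ∈ (0,1), x₀ ∈ ℝ, t₀ > 0, and set ȳ₀ = min{ y ∈ [x₀/ε, x₀/ε + 1) : b(y) = 0 } and y̲₀ = max{ y ∈ (x₀/ε − 1, x₀/ε] : b(y) = 0 } (both exist since b is 1-periodic and attains its maximum 0). Let η : [0, t₀/ε] → ℝ be differentiable with η(0) = x₀/ε such that for some constant r ≤ 0 one has ½|η′(s)|² + V(εη(s), η(s)) = r for all s ∈ [0, t₀/ε]. Then y̲₀ ≤ η(s) ≤ ȳ₀ for all s ∈ [0, t₀/ε]; in particular every trajectory of nonpositive energy stays within distance 1 of its starting point. -/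

import Mathlib

open Set

/-- A continuous 1-periodic function is bounded. -/
lemma bdd_of_periodic_continuous (f : ℝ → ℝ) (hf : Continuous f)
    (hp : Function.Periodic f 1) : ∃ C, 0 ≤ C ∧ ∀ y, |f y| ≤ C := by
  obtain ⟨C, hC⟩ := (isCompact_Icc (a := (0:ℝ)) (b := 1)).exists_bound_of_continuousOn
    hf.continuousOn
  refine ⟨C, le_trans (norm_nonneg (f 0)) (hC 0 ⟨le_rfl, zero_le_one⟩), fun y => ?_⟩
  obtain ⟨z, hz, he⟩ := hp.exists_mem_Ico₀ one_pos y
  rw [he]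
  simpa [Real.norm_eq_abs] using hC z (Set.Ico_subset_Icc_self hz)

/-- The derivative of a 1-periodic function is 1-periodic. -/
lemma periodic_deriv' {f : ℝ → ℝ} (hp : Function.Periodic f 1) :
    Function.Periodic (deriv f) 1 := by
  intro x
  have hfun : (fun y => f (y + 1)) = f := funext hp
  calc deriv f (x + 1) = deriv (fun y => f (y + 1)) x := (deriv_comp_add_const f 1 x).symm
    _ = deriv f x := by rw [hfun]

/-- Quadratic upper bound on `-b` near a global max where `b` vanishes. -/
lemma quad_bound (b : ℝ → ℝ) (hb : ContDiff ℝ 2 b) (hmax : ∀ y, b y ≤ 0) {C : ℝ}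
    (hC : ∀ y, |deriv (deriv b) y| ≤ C) {y₀ : ℝ} (h0 : b y₀ = 0) :
    ∀ y, -b y ≤ C / 2 * (y - y₀) ^ 2 := by
  have hC0 : 0 ≤ C := (abs_nonneg _).trans (hC y₀)
  have hbd : Differentiable ℝ b := hb.differentiable two_ne_zero
  have hb2 : ContDiff ℝ (1 + 1) b := by norm_num; exact hb
  have hbd' : Differentiable ℝ (deriv b) :=
    ((contDiff_succ_iff_deriv.mp hb2).2.2).differentiable one_ne_zero
  -- derivative vanishes at the max
  have hd0 : deriv b y₀ = 0 := by
    have hloc : IsLocalMax b y₀ := Filter.Eventually.of_forall (fun y => h0 ▸ hmax y)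
    exact hloc.deriv_eq_zero
  -- Lipschitz bound on `deriv b`
  have hlip : ∀ y, |deriv b y| ≤ C * |y - y₀| := by
    intro y
    have := Convex.norm_image_sub_le_of_norm_deriv_le (f := deriv b)
      (fun x _ => hbd' x) (fun x _ => by simpa [Real.norm_eq_abs] using hC x)
      convex_univ (Set.mem_univ y₀) (Set.mem_univ y)
    simpa [hd0, Real.norm_eq_abs] using this
  -- auxiliary function h y = b y + C/2 (y - y₀)²
  set h : ℝ → ℝ := fun y => b y + C / 2 * (y - y₀) ^ 2 with hh
  have hder : ∀ y, HasDerivAt h (deriv b y + C * (y - y₀)) y := by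
    intro y
    have h1 := (hbd y).hasDerivAt
    have h2 : HasDerivAt (fun y => C / 2 * (y - y₀) ^ 2)
        (C / 2 * ((2 : ℕ) * (y - y₀) ^ 1 * 1)) y :=
      (((hasDerivAt_id y).sub_const y₀).pow 2).const_mul (C / 2)
    have := h1.add h2
    refine (show HasDerivAt h _ y from this).congr_deriv ?_
    push_cast
    ring
  have hcont : Continuous h := Differentiable.continuous (fun y => (hder y).differentiableAt)
  have hy0 : h y₀ = 0 := by simp [hh, h0]
  intro y
  have key : 0 ≤ h y := by
    rcases lt_trichotomy y y₀ with hlt | heq | hgt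
    · obtain ⟨c, hc, hceq⟩ := exists_hasDerivAt_eq_slope h
        (fun y => deriv b y + C * (y - y₀)) hlt hcont.continuousOn
        (fun x _ => hder x)
      have hcb := hlip c
      have habs : |c - y₀| = y₀ - c := by
        rw [abs_of_nonpos (by linarith [hc.2] : c - y₀ ≤ 0)]; ring
      rw [habs] at hcb
      have hcle : deriv b c + C * (c - y₀) ≤ 0 := by
        have := (abs_le.mp hcb).2
        linarith
      rw [hceq, hy0] at *
      have hpos : (0:ℝ) < y₀ - y := by linarith
      have := div_nonpos_iff.mp (by rw [← hceq]; exact hcle)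
      rcases this with ⟨h1, h2⟩ | ⟨h1, h2⟩
      · linarith
      · linarith
    · rw [heq, hy0]
    · obtain ⟨c, hc, hceq⟩ := exists_hasDerivAt_eq_slope h
        (fun y => deriv b y + C * (y - y₀)) hgt hcont.continuousOn
        (fun x _ => hder x)
      have hcb := hlip c
      have habs : |c - y₀| = c - y₀ := abs_of_nonneg (by linarith [hc.1])
      rw [habs] at hcb
      have hcge : 0 ≤ deriv b c + C * (c - y₀) := by
        have := (abs_le.mp hcb).1
        linarith
      rw [hy0] at hceq
      have hpos : (0:ℝ) < y - y₀ := by linarith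
      have := div_nonneg_iff.mp (by rw [← hceq]; exact hcge)
      rcases this with ⟨h1, h2⟩ | ⟨h1, h2⟩
      · linarith
      · linarith
  simp only [hh] at key
  linarith

/-- Grönwall-type confinement from above. -/
lemma confine_above {η η' : ℝ → ℝ} {T K c : ℝ}
    (hηd : ∀ s ∈ Set.Icc (0:ℝ) T, HasDerivAt η (η' s) s)
    (hstart : η 0 ≤ c)
    (hbd : ∀ s ∈ Set.Icc (0:ℝ) T, |η' s| ≤ K * |η s - c|) :
    ∀ s ∈ Set.Icc (0:ℝ) T, η s ≤ c := by
  intro s₁ hs₁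
  by_contra hgt
  push_neg at hgt
  have hcont : ContinuousOn η (Set.Icc 0 T) :=
    fun t ht => (hηd t ht).continuousAt.continuousWithinAt
  have hsub : Set.Icc (0:ℝ) s₁ ⊆ Set.Icc 0 T := Set.Icc_subset_Icc le_rfl hs₁.2
  set S := Set.Icc (0:ℝ) s₁ ∩ η ⁻¹' Set.Iic c with hS
  have hS0 : (0:ℝ) ∈ S := ⟨⟨le_rfl, hs₁.1⟩, hstart⟩
  have hSne : S.Nonempty := ⟨0, hS0⟩
  have hSclosed : IsClosed S :=
    (hcont.mono hsub).preimage_isClosed_of_isClosed isClosed_Icc isClosed_Iic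
  have hSbdd : BddAbove S := ⟨s₁, fun x hx => hx.1.2⟩
  set t := sSup S with htdef
  have htS : t ∈ S := hSclosed.csSup_mem hSne hSbdd
  have ht1 : t ≤ s₁ := csSup_le hSne (fun x hx => hx.1.2)
  have ht0 : 0 ≤ t := le_csSup hSbdd hS0
  have hsub2 : Set.Icc t s₁ ⊆ Set.Icc 0 T := Set.Icc_subset_Icc ht0 hs₁.2
  -- η t = c by IVT
  have hηt : η t = c := by
    obtain ⟨u, hu, hηu⟩ := intermediate_value_Icc ht1 (hcont.mono hsub2)
      (show c ∈ Set.Icc (η t) (η s₁) from ⟨htS.2, le_of_lt hgt⟩)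
    have huS : u ∈ S := ⟨⟨ht0.trans hu.1, hu.2⟩, le_of_eq hηu⟩
    have hut : u ≤ t := le_csSup hSbdd huS
    have : u = t := le_antisymm hut hu.1
    rw [← this]; exact hηu
  -- Grönwall on [t, s₁]
  have key := norm_le_gronwallBound_of_norm_deriv_right_le
    (f := fun s => η s - c) (f' := η') (δ := 0) (K := K) (ε := 0) (a := t) (b := s₁)
    ((hcont.mono hsub2).sub continuousOn_const)
    (fun x hx => (((hηd x (hsub2 (Set.mem_Icc_of_Ico hx))).sub_const c)).hasDerivWithinAt.mono
      (Set.subset_univ _) |>.mono (fun y hy => trivial))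
    (by simp [hηt])
    (fun x hx => by
      have := hbd x (hsub2 (Set.mem_Icc_of_Ico hx))
      simpa [Real.norm_eq_abs] using this.trans (le_of_eq (by ring)))
  have := key s₁ ⟨ht1, le_rfl⟩
  rw [gronwallBound_ε0_δ0] at this
  have habs : |η s₁ - c| ≤ 0 := by simpa [Real.norm_eq_abs] using this
  have : η s₁ = c := by
    have := abs_nonpos_iff.mp habs
    linarith [sub_eq_zero.mp this]
  linarith

/-- Every Euler–Lagrange trajectory of nonpositive energy stays between the
nearest zeros of `b` on either side of its starting point (hence within
distance 1 of it). -/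
theorem nonpositive_energy_confinement
    (a b : ℝ → ℝ)
    (ha : ContDiff ℝ 1 a) (haBd : ∃ M : ℝ, ∀ x, |a x| ≤ M)
    (haPos : ∀ x, 0 < a x)
    (hb : ContDiff ℝ 2 b) (hbPer : Function.Periodic b 1)
    (hbNonpos : ∀ y, b y ≤ 0) (hbMax : ∃ y₀, b y₀ = 0)
    (ε x₀ t₀ : ℝ) (hε : ε ∈ Set.Ioo (0 : ℝ) 1) (ht₀ : 0 < t₀)
    (ybar : ℝ) (hybar : ybar ∈ Set.Ico (x₀ / ε) (x₀ / ε + 1))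
    (hybar0 : b ybar = 0)
    (hybarmin : ∀ y ∈ Set.Ico (x₀ / ε) (x₀ / ε + 1), b y = 0 → ybar ≤ y)
    (ylow : ℝ) (hylow : ylow ∈ Set.Ioc (x₀ / ε - 1) (x₀ / ε))
    (hylow0 : b ylow = 0)
    (hylowmax : ∀ y ∈ Set.Ioc (x₀ / ε - 1) (x₀ / ε), b y = 0 → y ≤ ylow)
    (η η' : ℝ → ℝ)
    (hηd : ∀ s ∈ Set.Icc (0 : ℝ) (t₀ / ε), HasDerivAt η (η' s) s)
    (hη0 : η 0 = x₀ / ε)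
    (r : ℝ) (hr : r ≤ 0)
    (hen : ∀ s ∈ Set.Icc (0 : ℝ) (t₀ / ε),
      (η' s) ^ 2 / 2 + a (ε * η s) * b (η s) = r) :
    ∀ s ∈ Set.Icc (0 : ℝ) (t₀ / ε), ylow ≤ η s ∧ η s ≤ ybar := by
  obtain ⟨M, hM⟩ := haBd
  have hM0 : 0 ≤ M := (abs_nonneg _).trans (hM 0)
  -- bound on second derivative of b
  have hb2 : ContDiff ℝ (1 + 1) b := by norm_num; exact hb
  have hdb1 : ContDiff ℝ 1 (deriv b) := (contDiff_succ_iff_deriv.mp hb2).2.2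
  have hdb1' : ContDiff ℝ (0 + 1) (deriv b) := by norm_num; exact hdb1
  have hcont2 : Continuous (deriv (deriv b)) :=
    ((contDiff_succ_iff_deriv.mp hdb1').2.2).continuous
  have hper2 : Function.Periodic (deriv (deriv b)) 1 := periodic_deriv' (periodic_deriv' hbPer)
  obtain ⟨C, hC0, hC⟩ := bdd_of_periodic_continuous _ hcont2 hper2
  set Q := C / 2 with hQ
  have hQ0 : 0 ≤ Q := by positivity
  have hquadU : ∀ y, -b y ≤ Q * (y - ybar) ^ 2 := quad_bound b hb hbNonpos hC hybar0
  have hquadL : ∀ y, -b y ≤ Q * (y - ylow) ^ 2 := quad_bound b hb hbNonpos hC hylow0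
  set K := Real.sqrt (2 * M * Q) with hK
  have hK0 : 0 ≤ K := Real.sqrt_nonneg _
  have hK2 : K ^ 2 = 2 * M * Q := Real.sq_sqrt (by positivity)
  -- general bound: |η'| ≤ K |η - y₀| whenever b y₀ = 0 and quad bound holds at y₀
  have keybound : ∀ (y₀ : ℝ), (∀ y, -b y ≤ Q * (y - y₀) ^ 2) →
      ∀ s ∈ Set.Icc (0:ℝ) (t₀ / ε), |η' s| ≤ K * |η s - y₀| := by
    intro y₀ hquad s hs
    have he := hen s hs
    have h1 := hquad (η s)
    have h2 : a (ε * η s) ≤ M := (le_abs_self _).trans (hM _)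
    have h3 : 0 < a (ε * η s) := haPos _
    have h4 : b (η s) ≤ 0 := hbNonpos _
    have h5 : η' s ^ 2 ≤ K ^ 2 * (η s - y₀) ^ 2 := by
      rw [hK2]
      have p1 : 0 ≤ (M - a (ε * η s)) * (-b (η s)) :=
        mul_nonneg (by linarith) (by linarith)
      have p2 : 0 ≤ M * (Q * (η s - y₀) ^ 2 - (-b (η s))) :=
        mul_nonneg hM0 (by linarith)
      nlinarith [sq_nonneg (η' s)]
    calc |η' s| = Real.sqrt (η' s ^ 2) := (Real.sqrt_sq_eq_abs _).symm
      _ ≤ Real.sqrt ((K * |η s - y₀|) ^ 2) := by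
          apply Real.sqrt_le_sqrt
          rw [mul_pow, sq_abs]
          exact h5
      _ = K * |η s - y₀| := Real.sqrt_sq (by positivity)
  intro s hs
  constructor
  · -- lower bound via confine_above applied to -η
    have hup := confine_above (η := fun s => -η s) (η' := fun s => -η' s)
      (T := t₀ / ε) (K := K) (c := -ylow)
      (fun t ht => (hηd t ht).neg)
      (by show -η 0 ≤ -ylow; rw [hη0]; linarith [hylow.2])
      (fun t ht => by
        show |(-η' t)| ≤ K * |(-η t) - (-ylow)|
        have := keybound ylow hquadL t ht
        have heq : |(-η t) - (-ylow)| = |η t - ylow| := by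
          rw [show (-η t) - (-ylow) = -(η t - ylow) by ring, abs_neg]
        rw [abs_neg, heq]
        exact this)
    have hloc : -η s ≤ -ylow := hup s hs
    linarith
  · exact confine_above hηd (by rw [hη0]; exact hybar.1) (keybound ybar hquadU) s hs
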